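/- Maximum mean extrapolability gain for symmetric noise: if η is symmetric about 0 with support [−η_max, η_max], then the gain γ(δ) = L·δ·F_η(η_max − δ) + L ∫_{η_max−δ}^{η_max} (η_max − η) dF_η(η) satisfies γ(δ) ≤ L·η_max for all δ > 0, with equality for all δ ≥ 2·η_max. -/

import Mathlib

open Set MeasureTheory

/-- maximum mean extrapolability gain for symmetric noise. If the
(continuous) law `μ` of the noise is symmetric about `0` with support `[−η_max, η_max]`,
then `γ(δ) = L·δ·F_η(η_max − δ) + L ∫_{η_max−δ}^{η_max} (η_max − η) dF_η(η)` satisfies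
`γ(δ) ≤ L·η_max` for all `δ > 0`, with equality for all `δ ≥ 2·η_max`. -/
theorem mean_extrapolability_gain_max
    (L ηmax δ : ℝ) (hL : 0 < L) (hηmax : 0 < ηmax) (hδ : 0 < δ)
    (μ : Measure ℝ) [IsProbabilityMeasure μ]
    (hsupp : μ (Icc (-ηmax) ηmax)ᶜ = 0)
    (hcont : ∀ t : ℝ, μ {t} = 0)
    (hsym : μ.map (fun t => -t) = μ) :
    (L * δ * (μ (Iic (ηmax - δ))).toReal
        + L * ∫ t in Ioc (ηmax - δ) ηmax, (ηmax - t) ∂μ ≤ L * ηmax) ∧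
    (2 * ηmax ≤ δ →
      L * δ * (μ (Iic (ηmax - δ))).toReal
        + L * ∫ t in Ioc (ηmax - δ) ηmax, (ηmax - t) ∂μ = L * ηmax) := by
  set a := ηmax - δ with ha
  have hIoi : μ (Ioi ηmax) = 0 :=
    measure_mono_null (fun x hx => by simp only [mem_compl_iff, mem_Icc, not_and_or, not_le]; right; exact hx) hsupp
  have hIio : μ (Iio (-ηmax)) = 0 :=
    measure_mono_null (fun x hx => by simp only [mem_compl_iff, mem_Icc, not_and_or, not_le]; left; exact hx) hsupp
  have hae : ∀ᵐ t ∂μ, t ∈ Icc (-ηmax) ηmax := by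
    rw [MeasureTheory.ae_iff]
    refine measure_mono_null (fun x hx => ?_) hsupp
    simpa using hx
  have hint : Integrable (fun t : ℝ => t) μ := by
    refine (integrable_const ηmax).mono' measurable_id.aestronglyMeasurable ?_
    exact hae.mono fun t ht => by rw [Real.norm_eq_abs]; exact abs_le.2 ⟨ht.1, ht.2⟩
  have hmean : ∫ t, t ∂μ = 0 := by
    have h1 : ∫ t, t ∂(μ.map (fun t : ℝ => -t)) = ∫ t, -t ∂μ :=
      integral_map measurable_neg.aemeasurable aestronglyMeasurable_id
    rw [hsym, integral_neg] at h1
    linarith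
  have hf : Integrable (fun t : ℝ => ηmax - t) μ := (integrable_const ηmax).sub hint
  have htot : ∫ t, (ηmax - t) ∂μ = ηmax := by
    rw [integral_sub (integrable_const _) hint, integral_const, hmean]
    simp
  have hsplit : (∫ t in Iic a, (ηmax - t) ∂μ) + ∫ t in Ioi a, (ηmax - t) ∂μ = ηmax := by
    have := integral_add_compl (measurableSet_Iic (a := a)) hf (f := fun t : ℝ => ηmax - t)
    rwa [compl_Iic, htot] at this
  have hIoieq : (∫ t in Ioi a, (ηmax - t) ∂μ) = ∫ t in Ioc a ηmax, (ηmax - t) ∂μ := by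
    apply setIntegral_congr_set
    rw [ae_eq_set]
    constructor
    · refine measure_mono_null ?_ hIoi
      intro x hx
      simp only [mem_diff, mem_Ioi, mem_Ioc, not_and, not_le] at hx
      exact hx.2 hx.1
    · refine measure_mono_null ?_ (measure_empty (μ := μ))
      intro x hx
      simp only [mem_diff, mem_Ioc, mem_Ioi] at hx
      exact absurd hx.1.1 hx.2
  constructor
  · have hlow : δ * (μ (Iic a)).toReal ≤ ∫ t in Iic a, (ηmax - t) ∂μ := by
      apply setIntegral_ge_of_const_le_real measurableSet_Iic (measure_ne_top μ _)
      · intro x hx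
        simp only [mem_Iic] at hx
        linarith
      · exact hf.integrableOn
    have hIoc_le : (∫ t in Ioc a ηmax, (ηmax - t) ∂μ) = ∫ t in Ioi a, (ηmax - t) ∂μ := hIoieq.symm
    have : δ * (μ (Iic a)).toReal + ∫ t in Ioc a ηmax, (ηmax - t) ∂μ ≤ ηmax := by
      rw [hIoc_le]; linarith
    nlinarith [this, hL.le]
  · intro h2
    have haneg : a ≤ -ηmax := by simp only [ha]; linarith
    have hIic0 : μ (Iic a) = 0 := by
      refine measure_mono_null (t := Iio (-ηmax) ∪ {-ηmax}) ?_ ?_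
      · intro x hx
        simp only [mem_Iic] at hx
        rcases lt_or_eq_of_le (le_trans hx haneg) with h | h
        · exact Or.inl h
        · exact Or.inr h
      · refine le_antisymm ?_ zero_le
        calc μ (Iio (-ηmax) ∪ {-ηmax}) ≤ μ (Iio (-ηmax)) + μ {-ηmax} := measure_union_le _ _
        _ = 0 := by rw [hIio, hcont]; simp
    have hIic_int : (∫ t in Iic a, (ηmax - t) ∂μ) = 0 := by
      rw [Measure.restrict_eq_zero.2 hIic0]; simp
    have : (∫ t in Ioc a ηmax, (ηmax - t) ∂μ) = ηmax := by
      rw [← hIoieq]; linarith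
    rw [this, hIic0]
    simp [mul_comm]
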